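/- In an infinitary pretopos, all small colimits are universal: for every small diagram D with colimit L, every object Y, and every morphism Y → L, the pullback of the diagram D along Y → L has colimit Y. In particular, coequalizers of arbitrary parallel pairs are stable under pullback. -/

import Mathlib

open CategoryTheory CategoryTheory.Limits

universe v u

/-- The pre-2025 Mathlib notion (binary): the coproduct of `X₁` and `X₂` is disjoint.
(Mathlib's `CoproductDisjoint` now has another meaning and signature.) -/
class OldCoproductDisjoint {C : Type u} [Category.{v} C] (X₁ X₂ : C) where
  isInitialOfIsPullbackOfIsCoproduct :
    ∀ {X Z : C} {pX₁ : X₁ ⟶ X} {pX₂ : X₂ ⟶ X} {f : Z ⟶ X₁} {g : Z ⟶ X₂}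
      {comm : f ≫ pX₁ = g ≫ pX₂},
      IsColimit (BinaryCofan.mk pX₁ pX₂) → IsLimit (PullbackCone.mk _ _ comm) → IsInitial Z
  mono_inl : ∀ (X : C) (X₁ : X₁ ⟶ X) (X₂ : X₂ ⟶ X) (_ : IsColimit (BinaryCofan.mk X₁ X₂)),
    Mono X₁
  mono_inr : ∀ (X : C) (X₁ : X₁ ⟶ X) (X₂ : X₂ ⟶ X) (_ : IsColimit (BinaryCofan.mk X₁ X₂)),
    Mono X₂

/-- The pre-2025 Mathlib notion: `C` has disjoint (binary) coproducts. -/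
class CoproductsDisjoint (C : Type u) [Category.{v} C] where
  CoproductDisjoint : ∀ X Y : C, OldCoproductDisjoint X Y

variable (C : Type u) [Category.{v} C] [HasFiniteLimits C]

/-- An equivalence groupoid in `C`: a pair of objects with a monomorphism
`X₁ ⟶ X₀ ⨯ X₀` which is an internal equivalence relation. -/
structure EqGpd where
  X₀ : C
  X₁ : C
  d₀ : X₁ ⟶ X₀
  d₁ : X₁ ⟶ X₀
  mono : Mono (prod.lift d₀ d₁)
  refl : ∀ (T : C) (x : T ⟶ X₀), ∃ h : T ⟶ X₁, h ≫ d₀ = x ∧ h ≫ d₁ = x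
  symm : ∀ (T : C) (x y : T ⟶ X₀), (∃ h : T ⟶ X₁, h ≫ d₀ = x ∧ h ≫ d₁ = y) →
    ∃ h : T ⟶ X₁, h ≫ d₀ = y ∧ h ≫ d₁ = x
  trans : ∀ (T : C) (x y z : T ⟶ X₀),
    (∃ h : T ⟶ X₁, h ≫ d₀ = x ∧ h ≫ d₁ = y) →
    (∃ h : T ⟶ X₁, h ≫ d₀ = y ∧ h ≫ d₁ = z) →
    ∃ h : T ⟶ X₁, h ≫ d₀ = x ∧ h ≫ d₁ = z

namespace EqGpd

variable {C}

/-- A morphism of equivalence groupoids. -/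
@[ext]
structure Hom (A B : EqGpd C) where
  f₀ : A.X₀ ⟶ B.X₀
  f₁ : A.X₁ ⟶ B.X₁
  w₀ : f₁ ≫ B.d₀ = A.d₀ ≫ f₀
  w₁ : f₁ ≫ B.d₁ = A.d₁ ≫ f₀

instance : Category (EqGpd C) where
  Hom A B := Hom A B
  id A := ⟨𝟙 _, 𝟙 _, by simp, by simp⟩
  comp {A B D} f g := ⟨f.f₀ ≫ g.f₀, f.f₁ ≫ g.f₁,
    by rw [Category.assoc, g.w₀, ← Category.assoc, f.w₀, Category.assoc],
    by rw [Category.assoc, g.w₁, ← Category.assoc, f.w₁, Category.assoc]⟩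
  id_comp f := by apply Hom.ext <;> simp
  comp_id f := by apply Hom.ext <;> simp
  assoc f g h := by apply Hom.ext <;> simp

@[simp] lemma comp_f₀ {A B D : EqGpd C} (f : A ⟶ B) (g : B ⟶ D) :
    (f ≫ g).f₀ = f.f₀ ≫ g.f₀ := rfl

@[simp] lemma comp_f₁ {A B D : EqGpd C} (f : A ⟶ B) (g : B ⟶ D) :
    (f ≫ g).f₁ = f.f₁ ≫ g.f₁ := rfl

@[simp] lemma id_f₀ (A : EqGpd C) : (𝟙 A : A ⟶ A).f₀ = 𝟙 A.X₀ := rfl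

@[simp] lemma id_f₁ (A : EqGpd C) : (𝟙 A : A ⟶ A).f₁ = 𝟙 A.X₁ := rfl

/-- The homotopy relation on morphisms of equivalence groupoids. -/
def htpy : HomRel (EqGpd C) := fun {A B} f g =>
  ∃ h : A.X₀ ⟶ B.X₁, h ≫ B.d₀ = f.f₀ ∧ h ≫ B.d₁ = g.f₀

/-- The embedding of `C` into equivalence groupoids via diagonals. -/
def disc : C ⥤ EqGpd C where
  obj X :=
    { X₀ := X
      X₁ := X
      d₀ := 𝟙 X
      d₁ := 𝟙 X
      mono := ⟨fun {Z} g h w => by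
        have := congrArg (fun t => t ≫ (prod.fst : X ⨯ X ⟶ X)) w
        simp at this
        erw [prod.lift_fst, prod.lift_fst] at this
        exact this⟩
      refl := fun T x => ⟨x, by simp, by simp⟩
      symm := fun T x y ⟨h, h0, h1⟩ => ⟨h, by simpa using h1, by simpa using h0⟩
      trans := fun T x y z ⟨h, h0, h1⟩ ⟨k, k0, k1⟩ =>
        ⟨h, h0, by
          simp only [Category.comp_id] at h0 h1 k0 k1 ⊢
          rw [h1, ← k0]; exact k1⟩ }
  map {X Y} u := ⟨u, u, by simp, by simp⟩
  map_id X := by apply Hom.ext <;> simp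
  map_comp f g := by apply Hom.ext <;> simp

end EqGpd

/-- `f` is an effective epimorphism: it is the coequalizer of its kernel pair. -/
def IsEffectiveEpi {X Y : C} (f : X ⟶ Y) : Prop :=
  ∃ w : pullback.fst f f ≫ f = pullback.snd f f ≫ f,
    Nonempty (IsColimit (Cofork.ofπ f w))

namespace ColimUniv

attribute [local simp] pullback.lift_fst pullback.lift_snd prod.lift_fst prod.lift_snd pullback.lift_fst_assoc pullback.lift_snd_assoc prod.lift_fst_assoc prod.lift_snd_assoc

set_option linter.unusedSectionVars false

variable {C}

/-- Build `IsColimit` of a cofork from a unique factorization property. -/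
noncomputable def coforkIsColimitMk {X Y Q : C} {f g : X ⟶ Y} (π : Y ⟶ Q) (w : f ≫ π = g ≫ π)
    (H : ∀ {W : C} (m : Y ⟶ W), f ≫ m = g ≫ m → ∃! t : Q ⟶ W, π ≫ t = m) :
    IsColimit (Cofork.ofπ π w) :=
  Cofork.IsColimit.mk _ (fun s => (H s.π s.condition).exists.choose)
    (fun s => by simpa using (H s.π s.condition).exists.choose_spec)
    (fun s m hm => by
      have h1 := (H s.π s.condition).exists.choose_spec
      exact (H s.π s.condition).unique (by simpa using hm) h1)

theorem epi_of_cofork {X Y Q : C} {f g : X ⟶ Y} {π : Y ⟶ Q} {w : f ≫ π = g ≫ π}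
    (hc : IsColimit (Cofork.ofπ π w)) : Epi π :=
  ⟨fun u v huv => Cofork.IsColimit.hom_ext hc (by simpa using huv)⟩

theorem epi_of_effEpi {X Y : C} {f : X ⟶ Y}
    (h : IsEffectiveEpi C f) : Epi f := by
  obtain ⟨w, ⟨hc⟩⟩ := h
  exact epi_of_cofork hc

/-- Descend a morphism into a subobject along an effective epi. -/
theorem descend {T' T E M : C} {p : T' ⟶ T}
    (hp : IsEffectiveEpi C p) {m : E ⟶ M} (hm : Mono m) (φ : T' ⟶ E) (ψ : T ⟶ M)
    (hcomm : φ ≫ m = p ≫ ψ) : ∃ τ : T ⟶ E, p ≫ τ = φ ∧ τ ≫ m = ψ := by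
  obtain ⟨w, ⟨hc⟩⟩ := hp
  have hepi : Epi p := epi_of_cofork hc
  have hco : pullback.fst p p ≫ φ = pullback.snd p p ≫ φ := by
    rw [← cancel_mono m]
    simp only [Category.assoc, hcomm]
    rw [← Category.assoc, ← Category.assoc, pullback.condition]
  refine ⟨hc.desc (Cofork.ofπ φ hco), ?_, ?_⟩
  · simpa using Cofork.IsColimit.π_desc hc (t := Cofork.ofπ φ hco)
  · rw [← cancel_epi p, ← Category.assoc]
    have : p ≫ hc.desc (Cofork.ofπ φ hco) = φ := by
      simpa using Cofork.IsColimit.π_desc hc (t := Cofork.ofπ φ hco)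
    rw [this, hcomm]

section InfiniteCoprod

variable [∀ J : Type v, HasColimitsOfShape (Discrete J) C]

/-- The canonical cocone exhibiting `T` as the coproduct of the pullbacks of the
coproduct inclusions along `w : T ⟶ ∐ X`. -/
@[simps]
noncomputable def decCocone {ι : Type v} (X : ι → C) {T : C} (w : T ⟶ ∐ X) :
    Cocone (Discrete.functor fun i => pullback (Sigma.ι X i) w) where
  pt := T
  ι := Discrete.natTrans fun i => pullback.snd (Sigma.ι X i.as) w

/-- Universality of coproducts: decomposition of the domain of a map into a coproduct. -/
theorem decompose
    (huniv : ∀ {J : Type v} (F : Discrete J ⥤ C) (c : Cocone F),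
      IsColimit c → IsUniversalColimit c)
    {ι : Type v} (X : ι → C) {T : C} (w : T ⟶ ∐ X) :
    Nonempty (IsColimit (decCocone X w)) := by
  refine huniv (Discrete.functor X) (colimit.cocone _) (colimit.isColimit _)
    (decCocone X w) (Discrete.natTrans fun i => pullback.fst (Sigma.ι X i.as) w) w ?_
    (NatTrans.equifibered_of_discrete _) ?_
  · ext ⟨i⟩
    exact pullback.condition
  · rintro ⟨i⟩
    exact (IsPullback.of_hasPullback (Sigma.ι X i) w).flip

end InfiniteCoprod

/-- The kernel pair of a morphism, as an equivalence groupoid. -/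
@[simps, reducible]
noncomputable def kerGpd {X Z : C} (f : X ⟶ Z) : EqGpd C where
  X₀ := X
  X₁ := pullback f f
  d₀ := pullback.fst f f
  d₁ := pullback.snd f f
  mono := ⟨fun {W} g h w => by
    apply pullback.hom_ext
    · simpa using congrArg (· ≫ (prod.fst : X ⨯ X ⟶ X)) w
    · simpa using congrArg (· ≫ (prod.snd : X ⨯ X ⟶ X)) w⟩
  refl := fun T x => ⟨pullback.lift x x rfl, by simp, by simp⟩
  symm := fun T x y ⟨h, h0, h1⟩ =>
    ⟨pullback.lift y x (by rw [← h0, ← h1, Category.assoc, Category.assoc,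
      ← pullback.condition]), by simp, by simp⟩
  trans := fun T x y z ⟨h, h0, h1⟩ ⟨k, k0, k1⟩ =>
    ⟨pullback.lift x z (by
      rw [← h0, ← k1, Category.assoc, Category.assoc, pullback.condition,
        ← Category.assoc, h1, ← k0, Category.assoc, pullback.condition]),
      by simp, by simp⟩

/-- Existence of (effective epi)-mono factorizations. -/
theorem imageFact
    (heff : ∀ A : EqGpd C, ∃ (Q : C) (q : A.X₀ ⟶ Q) (w : A.d₀ ≫ q = A.d₁ ≫ q),
      Nonempty (IsColimit (Cofork.ofπ q w)) ∧ IsIso (pullback.lift A.d₀ A.d₁ w))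
    (hstab : ∀ {X Y Z : C} (f : X ⟶ Y) (g : Z ⟶ Y),
      IsEffectiveEpi C f → IsEffectiveEpi C (pullback.snd f g))
    {X Z : C} (f : X ⟶ Z) :
    ∃ (E : C) (e : X ⟶ E) (m : E ⟶ Z), e ≫ m = f ∧ Mono m ∧ IsEffectiveEpi C e := by
  obtain ⟨Q, q, w, ⟨hQ⟩, hiso⟩ := heff (kerGpd f)
  simp only [kerGpd_d₀, kerGpd_d₁, kerGpd_X₀, kerGpd_X₁] at hQ hiso
  -- the induced monomorphism
  have hwf : pullback.fst f f ≫ f = pullback.snd f f ≫ f := pullback.condition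
  set m : Q ⟶ Z := hQ.desc (Cofork.ofπ f hwf) with hm_def
  have hqm : q ≫ m = f := by simpa using Cofork.IsColimit.π_desc hQ (t := Cofork.ofπ f hwf)
  -- `q` is an effective epi
  have hkfact : ∀ {W : C} (u v : W ⟶ X), u ≫ q = v ≫ q → u ≫ f = v ≫ f := by
    intro W u v huv
    rw [← hqm, ← Category.assoc, ← Category.assoc, huv]
  have hqeff : IsEffectiveEpi C q := by
    refine ⟨pullback.condition, ⟨coforkIsColimitMk _ _ ?_⟩⟩
    intro W n hn
    have hepi : Epi q := epi_of_cofork hQ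
    have hker : pullback.fst f f ≫ n = pullback.snd f f ≫ n := by
      have h1 : pullback.lift (pullback.fst f f) (pullback.snd f f) w ≫
          pullback.fst q q = pullback.fst f f := by simp
      have h2 : pullback.lift (pullback.fst f f) (pullback.snd f f) w ≫
          pullback.snd q q = pullback.snd f f := by simp
      have hk := congrArg
        (fun t => pullback.lift (pullback.fst f f) (pullback.snd f f) w ≫ t) hn
      simp only [← Category.assoc] at hk
      rw [h1, h2] at hk
      exact hk
    have hfac : q ≫ hQ.desc (Cofork.ofπ n hker) = n := by
      simpa using Cofork.IsColimit.π_desc hQ (t := Cofork.ofπ n hker)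
    refine ⟨hQ.desc (Cofork.ofπ n hker), hfac, ?_⟩
    intro t ht
    rw [← cancel_epi q, ht]
    exact hfac.symm
  refine ⟨Q, q, m, hqm, ⟨fun {T} a b hab => ?_⟩, hqeff⟩
  -- mono: cover twice and use the kernel pair
  set P₁ := pullback q a with hP₁
  have hp₁ : IsEffectiveEpi C (pullback.snd q a) := hstab q a hqeff
  set P₂ := pullback q (pullback.snd q a ≫ b) with hP₂
  have hp₂ : IsEffectiveEpi C (pullback.snd q (pullback.snd q a ≫ b)) :=
    hstab q (pullback.snd q a ≫ b) hqeff
  have e₁ : Epi (pullback.snd q a) := epi_of_effEpi hp₁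
  have e₂ : Epi (pullback.snd q (pullback.snd q a ≫ b)) := epi_of_effEpi hp₂
  set x₁ : P₂ ⟶ X := pullback.snd q (pullback.snd q a ≫ b) ≫ pullback.fst q a with hx₁
  set x₂ : P₂ ⟶ X := pullback.fst q (pullback.snd q a ≫ b) with hx₂
  have hx₁q : x₁ ≫ q = pullback.snd q (pullback.snd q a ≫ b) ≫ pullback.snd q a ≫ a := by
    rw [hx₁, Category.assoc, pullback.condition]
  have hx₂q : x₂ ≫ q = pullback.snd q (pullback.snd q a ≫ b) ≫ pullback.snd q a ≫ b := by
    rw [hx₂, pullback.condition]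
  have hxf : x₁ ≫ f = x₂ ≫ f := by
    rw [← hqm, ← Category.assoc, ← Category.assoc, hx₁q, hx₂q]
    simp only [Category.assoc, hab]
  have hxq : x₁ ≫ q = x₂ ≫ q := by
    have h1 : pullback.lift x₁ x₂ hxf ≫ pullback.lift (pullback.fst f f)
        (pullback.snd f f) w ≫ pullback.fst q q = x₁ := by simp
    have h2 : pullback.lift x₁ x₂ hxf ≫ pullback.lift (pullback.fst f f)
        (pullback.snd f f) w ≫ pullback.snd q q = x₂ := by simp
    have hk := congrArg (fun t => pullback.lift x₁ x₂ hxf ≫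
      pullback.lift (pullback.fst f f) (pullback.snd f f) w ≫ t)
      (pullback.condition (f := q) (g := q))
    have h1q := congrArg (· ≫ q) h1
    have h2q := congrArg (· ≫ q) h2
    simp only [Category.assoc] at h1q h2q hk
    rw [h1q, h2q] at hk
    exact hk
  rw [hx₁q, hx₂q] at hxq
  rw [← cancel_epi (pullback.snd q a), ← cancel_epi (pullback.snd q (pullback.snd q a ≫ b))]
  simpa using hxq

section Chains

/-- A span over `A`. -/
structure SpanA (A : C) : Type (max u v) where
  X : C
  l : X ⟶ A
  r : X ⟶ A

variable {A G : C}

/-- The `n`-fold composite of the generating relation with itself. -/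
@[reducible] noncomputable def chain (gl gr : G ⟶ A) : ℕ → SpanA A
  | 0 => ⟨A, 𝟙 A, 𝟙 A⟩
  | n+1 => ⟨pullback (chain gl gr n).r gl,
      pullback.fst (chain gl gr n).r gl ≫ (chain gl gr n).l,
      pullback.snd (chain gl gr n).r gl ≫ gr⟩

variable (gl gr : G ⟶ A)

theorem chain_comp {W : C} (m : A ⟶ W) (hm : gl ≫ m = gr ≫ m) :
    ∀ n, (chain gl gr n).l ≫ m = (chain gl gr n).r ≫ m := by
  intro n
  induction n with
  | zero => rfl
  | succ n ih =>
    show (pullback.fst _ _ ≫ _) ≫ m = (pullback.snd _ _ ≫ _) ≫ m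
    rw [Category.assoc, ih, ← Category.assoc, pullback.condition,
      Category.assoc, hm, Category.assoc]

/-- Two generalized elements of `A` are related by a chain of length `n`. -/
def Rel (n : ℕ) {T : C} (x y : T ⟶ A) : Prop :=
  ∃ w : T ⟶ (chain gl gr n).X, w ≫ (chain gl gr n).l = x ∧ w ≫ (chain gl gr n).r = y

theorem rel_zero {T : C} (x : T ⟶ A) : Rel gl gr 0 x x :=
  ⟨x, Category.comp_id x, Category.comp_id x⟩

theorem rel_zero_eq {T : C} {x y : T ⟶ A} (h : Rel gl gr 0 x y) : x = y := by
  obtain ⟨w, h1, h2⟩ := h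
  rw [← h1, ← h2]

theorem rel_succ {n : ℕ} {T : C} {x y : T ⟶ A} (h : Rel gl gr n x y)
    (g : T ⟶ G) (hg : g ≫ gl = y) : Rel gl gr (n+1) x (g ≫ gr) := by
  obtain ⟨w, h1, h2⟩ := h
  refine ⟨pullback.lift w g (by rw [h2, hg]), ?_, ?_⟩
  · show _ ≫ pullback.fst _ _ ≫ _ = x
    rw [← Category.assoc, pullback.lift_fst, h1]
  · show _ ≫ pullback.snd _ _ ≫ _ = g ≫ gr
    rw [← Category.assoc, pullback.lift_snd]

theorem rel_one {T : C} (g : T ⟶ G) : Rel gl gr 1 (g ≫ gl) (g ≫ gr) := by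
  simpa using rel_succ gl gr (rel_zero gl gr (g ≫ gl)) g rfl

theorem rel_destruct {n : ℕ} {T : C} {x y : T ⟶ A} (h : Rel gl gr (n+1) x y) :
    ∃ (g : T ⟶ G), Rel gl gr n x (g ≫ gl) ∧ g ≫ gr = y := by
  obtain ⟨w, h1, h2⟩ := h
  refine ⟨w ≫ pullback.snd _ _, ⟨w ≫ pullback.fst _ _, ?_, ?_⟩, ?_⟩
  · rw [Category.assoc]; exact h1
  · rw [Category.assoc, pullback.condition, Category.assoc]
  · rw [Category.assoc]; exact h2

theorem rel_trans {T : C} {x y z : T ⟶ A} {n m : ℕ}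
    (h1 : Rel gl gr n x y) (h2 : Rel gl gr m y z) : ∃ k, Rel gl gr k x z := by
  induction m generalizing z with
  | zero => exact ⟨n, (rel_zero_eq gl gr h2) ▸ h1⟩
  | succ m ih =>
    obtain ⟨g, hg1, hg2⟩ := rel_destruct gl gr h2
    obtain ⟨k, hk⟩ := ih hg1
    exact ⟨k + 1, hg2 ▸ rel_succ gl gr hk g rfl⟩

theorem rel_symm (σ : G ⟶ G) (hσl : σ ≫ gl = gr) (hσr : σ ≫ gr = gl)
    {T : C} {x y : T ⟶ A} {n : ℕ} (h : Rel gl gr n x y) : ∃ k, Rel gl gr k y x := by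
  induction n generalizing y with
  | zero => exact ⟨0, (rel_zero_eq gl gr h) ▸ rel_zero gl gr x⟩
  | succ n ih =>
    obtain ⟨g, hg1, hg2⟩ := rel_destruct gl gr h
    obtain ⟨k, hk⟩ := ih hg1
    have hrev : Rel gl gr 1 y (g ≫ gl) := by
      have := rel_one gl gr (g ≫ σ)
      rw [Category.assoc, Category.assoc, hσl, hσr, hg2] at this
      exact this
    exact rel_trans gl gr hrev hk

end Chains

section KernelZigzag

variable [∀ J : Type v, HasColimitsOfShape (Discrete J) C]

/-- In an infinitary pretopos, if `q` is the coequalizer of a symmetric pair of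
"generators", then any two generalized elements identified by `q` are, after passing
to a cover, connected by finite zigzag chains of generators. -/
theorem kernelZigzag
    (huniv : ∀ {J : Type v} (F : Discrete J ⥤ C) (c : Cocone F),
      IsColimit c → IsUniversalColimit c)
    (heff : ∀ A : EqGpd C, ∃ (Q : C) (q : A.X₀ ⟶ Q) (w : A.d₀ ≫ q = A.d₁ ≫ q),
      Nonempty (IsColimit (Cofork.ofπ q w)) ∧ IsIso (pullback.lift A.d₀ A.d₁ w))
    (hstab : ∀ {X Y Z : C} (f : X ⟶ Y) (g : Z ⟶ Y),
      IsEffectiveEpi C f → IsEffectiveEpi C (pullback.snd f g))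
    {A G Lc : C} (gl gr : G ⟶ A) (σ : G ⟶ G) (hσl : σ ≫ gl = gr) (hσr : σ ≫ gr = gl)
    (q : A ⟶ Lc) (wq : gl ≫ q = gr ≫ q) (hq : IsColimit (Cofork.ofπ q wq))
    {T : C} (a b : T ⟶ A) (hab : a ≫ q = b ≫ q) :
    ∃ (I : Type v) (P : I → C) (e : ∀ i, P i ⟶ T) (N : I → ℕ)
      (w : ∀ i, P i ⟶ (chain gl gr (N i)).X),
      (∀ {W : C} (φ ψ : T ⟶ W), (∀ i, e i ≫ φ = e i ≫ ψ) → φ = ψ) ∧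
      (∀ i, w i ≫ (chain gl gr (N i)).l = e i ≫ a ∧
        w i ≫ (chain gl gr (N i)).r = e i ≫ b) := by
  classical
  -- the union of all the chains
  set SpF : ULift.{v} ℕ → C := fun n => (chain gl gr n.down).X with hSpF
  set Lg : (∐ SpF) ⟶ A := Sigma.desc fun n => (chain gl gr n.down).l with hLg
  set Rg : (∐ SpF) ⟶ A := Sigma.desc fun n => (chain gl gr n.down).r with hRg
  -- its image `E ↪ A ⨯ A`
  obtain ⟨E, e₀, m₀, hfac, hm₀, he₀⟩ := imageFact heff hstab (prod.lift Lg Rg)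
  set d₀ : E ⟶ A := m₀ ≫ prod.fst with hd₀
  set d₁ : E ⟶ A := m₀ ≫ prod.snd with hd₁
  have hepi₀ : Epi e₀ := epi_of_effEpi he₀
  have hed0 : e₀ ≫ d₀ = Lg := by
    rw [hd₀, ← Category.assoc, hfac, prod.lift_fst]
  have hed1 : e₀ ≫ d₁ = Rg := by
    rw [hd₁, ← Category.assoc, hfac, prod.lift_snd]
  have hm₀' : prod.lift d₀ d₁ = m₀ := by
    apply Limits.prod.hom_ext <;> simp [hd₀, hd₁]
  -- the canonical witnesses inside `E`
  have hwitE : ∀ {T₀ : C} (n : ℕ) (wn : T₀ ⟶ (chain gl gr n).X),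
      (wn ≫ Sigma.ι SpF ⟨n⟩ ≫ e₀) ≫ d₀ = wn ≫ (chain gl gr n).l ∧
      (wn ≫ Sigma.ι SpF ⟨n⟩ ≫ e₀) ≫ d₁ = wn ≫ (chain gl gr n).r := by
    intro T₀ n wn
    constructor
    · rw [Category.assoc, Category.assoc, hed0, hLg, Sigma.ι_desc]
    · rw [Category.assoc, Category.assoc, hed1, hRg, Sigma.ι_desc]
  -- covering and decomposing a generalized element of `E`
  have split : ∀ {T₀ : C} (h : T₀ ⟶ E),
      ∃ (T' : C) (p : T' ⟶ T₀), IsEffectiveEpi C p ∧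
      ∃ (I : Type v) (P : I → C) (s : ∀ i, P i ⟶ T') (N : I → ℕ)
        (w : ∀ i, P i ⟶ (chain gl gr (N i)).X),
        (∀ i, w i ≫ (chain gl gr (N i)).l = s i ≫ p ≫ h ≫ d₀ ∧
              w i ≫ (chain gl gr (N i)).r = s i ≫ p ≫ h ≫ d₁) ∧
        (∀ {W : C} (φ ψ : T' ⟶ W), (∀ i, s i ≫ φ = s i ≫ ψ) → φ = ψ) ∧
        (∀ {W : C} (k : ∀ i, P i ⟶ W), ∃ t : T' ⟶ W, ∀ i, s i ≫ t = k i) := by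
    intro T₀ h
    obtain ⟨hcd⟩ := decompose huniv SpF (pullback.fst e₀ h)
    have hpe : IsEffectiveEpi C (pullback.snd e₀ h) := hstab e₀ h he₀
    refine ⟨pullback e₀ h, pullback.snd e₀ h, hpe, ULift.{v} ℕ,
      fun n => pullback (Sigma.ι SpF n) (pullback.fst e₀ h),
      fun n => pullback.snd _ _, fun n => n.down, fun n => pullback.fst _ _,
      fun n => ?_, ?_, ?_⟩
    · have hc1 : pullback.fst (Sigma.ι SpF n) (pullback.fst e₀ h) ≫ Sigma.ι SpF n =
        pullback.snd (Sigma.ι SpF n) (pullback.fst e₀ h) ≫ pullback.fst e₀ h :=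
        pullback.condition
      have hfl : pullback.fst e₀ h ≫ e₀ = pullback.snd e₀ h ≫ h := pullback.condition
      constructor
      · have : Sigma.ι SpF n ≫ Lg = (chain gl gr n.down).l := by
          rw [hLg]; exact Sigma.ι_desc _ _
        rw [← this, ← Category.assoc, hc1, Category.assoc, ← hed0,
          ← Category.assoc (pullback.fst e₀ h), hfl]
        simp only [Category.assoc]
      · have : Sigma.ι SpF n ≫ Rg = (chain gl gr n.down).r := by
          rw [hRg]; exact Sigma.ι_desc _ _
        rw [← this, ← Category.assoc, hc1, Category.assoc, ← hed1,
          ← Category.assoc (pullback.fst e₀ h), hfl]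
        simp only [Category.assoc]
    · intro W φ ψ hφψ
      exact hcd.hom_ext (fun ⟨n⟩ => by exact hφψ n)
    · intro W k
      refine ⟨hcd.desc ⟨W, Discrete.natTrans fun n => k n.as⟩, fun n => ?_⟩
      exact hcd.fac ⟨W, Discrete.natTrans fun n => k n.as⟩ ⟨n⟩
  -- the equivalence groupoid structure on `E`
  have hsymmE : ∀ (T₀ : C) (x y : T₀ ⟶ A),
      (∃ h : T₀ ⟶ E, h ≫ d₀ = x ∧ h ≫ d₁ = y) →
      ∃ h : T₀ ⟶ E, h ≫ d₀ = y ∧ h ≫ d₁ = x := by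
    intro T₀ x y ⟨h, h0, h1⟩
    obtain ⟨T', p, hp, I, P, s, N, w, hend, hjepi, hdesc⟩ := split h
    have hR : ∀ i, ∃ k, Rel gl gr k (s i ≫ p ≫ y) (s i ≫ p ≫ x) := by
      intro i
      refine rel_symm gl gr σ hσl hσr ⟨w i, ?_, ?_⟩
      · rw [(hend i).1, h0]
      · rw [(hend i).2, h1]
    choose K wit hw1 hw2 using hR
    obtain ⟨t, ht⟩ := hdesc fun i => wit i ≫ Sigma.ι SpF ⟨K i⟩ ≫ e₀
    have ht0 : t ≫ d₀ = p ≫ y := by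
      refine hjepi _ _ fun i => ?_
      rw [← Category.assoc, ht i, (hwitE (K i) (wit i)).1, hw1, ← Category.assoc]
    have ht1 : t ≫ d₁ = p ≫ x := by
      refine hjepi _ _ fun i => ?_
      rw [← Category.assoc, ht i, (hwitE (K i) (wit i)).2, hw2, ← Category.assoc]
    obtain ⟨τ, hτ1, hτ2⟩ := descend hp hm₀ t (prod.lift y x) (by
      apply Limits.prod.hom_ext
      · rw [Category.assoc, ← hd₀, ht0, Category.assoc, prod.lift_fst]
      · rw [Category.assoc, ← hd₁, ht1, Category.assoc, prod.lift_snd])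
    refine ⟨τ, ?_, ?_⟩
    · rw [hd₀, ← Category.assoc, hτ2, prod.lift_fst]
    · rw [hd₁, ← Category.assoc, hτ2, prod.lift_snd]
  have htransE : ∀ (T₀ : C) (x y z : T₀ ⟶ A),
      (∃ h : T₀ ⟶ E, h ≫ d₀ = x ∧ h ≫ d₁ = y) →
      (∃ h : T₀ ⟶ E, h ≫ d₀ = y ∧ h ≫ d₁ = z) →
      ∃ h : T₀ ⟶ E, h ≫ d₀ = x ∧ h ≫ d₁ = z := by
    intro T₀ x y z ⟨h₁, h10, h11⟩ ⟨h₂, h20, h21⟩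
    obtain ⟨T', p, hp, I, P, s, N, w, hend, hjepi, hdesc⟩ := split h₁
    -- on each piece, we get a map into `E` with endpoints `x|, z|`
    have hpcs : ∀ i, ∃ τ : P i ⟶ E,
        τ ≫ d₀ = s i ≫ p ≫ x ∧ τ ≫ d₁ = s i ≫ p ≫ z := by
      intro i
      obtain ⟨T'', p', hp', I', P', s', N', w', hend', hjepi', hdesc'⟩ :=
        split (s i ≫ p ≫ h₂)
      have hR : ∀ i', ∃ k, Rel gl gr k (s' i' ≫ p' ≫ s i ≫ p ≫ x)
          (s' i' ≫ p' ≫ s i ≫ p ≫ z) := by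
        intro i'
        have r1 : Rel gl gr (N i) (s' i' ≫ p' ≫ s i ≫ p ≫ x)
            (s' i' ≫ p' ≫ s i ≫ p ≫ y) := by
          refine ⟨s' i' ≫ p' ≫ w i, ?_, ?_⟩
          · rw [Category.assoc, Category.assoc, (hend i).1, h10]
          · rw [Category.assoc, Category.assoc, (hend i).2, h11]
        have r2 : Rel gl gr (N' i') (s' i' ≫ p' ≫ s i ≫ p ≫ y)
            (s' i' ≫ p' ≫ s i ≫ p ≫ z) := by
          have e1 := (hend' i').1
          have e2 := (hend' i').2
          simp only [Category.assoc] at e1 e2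
          rw [h20] at e1
          rw [h21] at e2
          exact ⟨w' i', e1, e2⟩
        exact rel_trans gl gr r1 r2
      choose K wit hw1 hw2 using hR
      obtain ⟨t, ht⟩ := hdesc' fun i' => wit i' ≫ Sigma.ι SpF ⟨K i'⟩ ≫ e₀
      have ht0 : t ≫ d₀ = p' ≫ s i ≫ p ≫ x := by
        refine hjepi' _ _ fun i' => ?_
        rw [← Category.assoc, ht i', (hwitE (K i') (wit i')).1, hw1]
      have ht1 : t ≫ d₁ = p' ≫ s i ≫ p ≫ z := by
        refine hjepi' _ _ fun i' => ?_
        rw [← Category.assoc, ht i', (hwitE (K i') (wit i')).2, hw2]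
      obtain ⟨τ, hτ1, hτ2⟩ := descend hp' hm₀ t
        (prod.lift (s i ≫ p ≫ x) (s i ≫ p ≫ z)) (by
          apply Limits.prod.hom_ext
          · rw [Category.assoc, ← hd₀, ht0, Category.assoc, prod.lift_fst]
          · rw [Category.assoc, ← hd₁, ht1, Category.assoc, prod.lift_snd])
      refine ⟨τ, ?_, ?_⟩
      · rw [hd₀, ← Category.assoc, hτ2, prod.lift_fst]
      · rw [hd₁, ← Category.assoc, hτ2, prod.lift_snd]
    choose τs hτ0 hτ1 using hpcs
    obtain ⟨t, ht⟩ := hdesc τs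
    have ht0 : t ≫ d₀ = p ≫ x := by
      refine hjepi _ _ fun i => ?_
      rw [← Category.assoc, ht i, hτ0 i, ← Category.assoc]
    have ht1 : t ≫ d₁ = p ≫ z := by
      refine hjepi _ _ fun i => ?_
      rw [← Category.assoc, ht i, hτ1 i, ← Category.assoc]
    obtain ⟨τ, hτa, hτb⟩ := descend hp hm₀ t (prod.lift x z) (by
      apply Limits.prod.hom_ext
      · rw [Category.assoc, ← hd₀, ht0, Category.assoc, prod.lift_fst]
      · rw [Category.assoc, ← hd₁, ht1, Category.assoc, prod.lift_snd])
    refine ⟨τ, ?_, ?_⟩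
    · rw [hd₀, ← Category.assoc, hτb, prod.lift_fst]
    · rw [hd₁, ← Category.assoc, hτb, prod.lift_snd]
  set EG : EqGpd C :=
    { X₀ := A
      X₁ := E
      d₀ := d₀
      d₁ := d₁
      mono := hm₀' ▸ hm₀
      refl := fun T₀ x => by
        refine ⟨x ≫ Sigma.ι SpF ⟨0⟩ ≫ e₀, ?_, ?_⟩
        · rw [(hwitE 0 x).1]; exact Category.comp_id x
        · rw [(hwitE 0 x).2]; exact Category.comp_id x
      symm := hsymmE
      trans := htransE } with hEG
  -- `q` is the coequalizer of `(d₀, d₁)`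
  have hLgq : Lg ≫ q = Rg ≫ q := by
    rw [hLg, hRg]
    apply Sigma.hom_ext
    intro n
    rw [← Category.assoc, Sigma.ι_desc, ← Category.assoc, Sigma.ι_desc]
    exact chain_comp gl gr q wq n.down
  have wdq : d₀ ≫ q = d₁ ≫ q := by
    rw [← cancel_epi e₀]
    have h1 := congrArg (· ≫ q) hed0
    have h2 := congrArg (· ≫ q) hed1
    simp only [Category.assoc] at h1 h2
    rw [h1, h2, hLgq]
  have hqepi : Epi q := epi_of_cofork hq
  have hqE : IsColimit (Cofork.ofπ q wdq) := by
    refine coforkIsColimitMk q wdq ?_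
    intro W n hn
    have hgen : gl ≫ n = gr ≫ n := by
      obtain ⟨wit, hw1, hw2⟩ := rel_one gl gr (𝟙 G)
      rw [Category.id_comp] at hw1 hw2
      have e1 := (hwitE 1 wit).1
      have e2 := (hwitE 1 wit).2
      rw [hw1] at e1
      rw [hw2] at e2
      rw [← e1, ← e2, Category.assoc, Category.assoc, hn]
      simp only [Category.assoc]
    refine ⟨hq.desc (Cofork.ofπ n hgen), ?_, ?_⟩
    · simpa using Cofork.IsColimit.π_desc hq (t := Cofork.ofπ n hgen)
    · intro t ht
      rw [← cancel_epi q, ht]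
      exact (by simpa using Cofork.IsColimit.π_desc hq (t := Cofork.ofπ n hgen) :
        q ≫ hq.desc (Cofork.ofπ n hgen) = n).symm
  -- the effective quotient of `EG` agrees with `q`, so the kernel pair of `q`
  -- factors through `E`
  obtain ⟨Q, cE, wE, ⟨hQc⟩, hisoE⟩ := heff EG
  have wE' : d₀ ≫ cE = d₁ ≫ cE := wE
  have hqt₀ : q ≫ hqE.desc (Cofork.ofπ cE wE') = cE := by
    simpa using Cofork.IsColimit.π_desc hqE (t := Cofork.ofπ cE wE')
  have habE : a ≫ cE = b ≫ cE := by
    rw [← hqt₀, ← Category.assoc, ← Category.assoc, hab]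
  have hiE1 : pullback.lift EG.d₀ EG.d₁ wE ≫ pullback.fst cE cE = d₀ :=
    pullback.lift_fst _ _ _
  have hiE2 : pullback.lift EG.d₀ EG.d₁ wE ≫ pullback.snd cE cE = d₁ :=
    pullback.lift_snd _ _ _
  have hinv1 : inv (pullback.lift EG.d₀ EG.d₁ wE) ≫ d₀ = pullback.fst cE cE := by
    rw [IsIso.inv_comp_eq, hiE1]
  have hinv2 : inv (pullback.lift EG.d₀ EG.d₁ wE) ≫ d₁ = pullback.snd cE cE := by
    rw [IsIso.inv_comp_eq, hiE2]
  set τ : T ⟶ E := pullback.lift a b habE ≫ inv (pullback.lift EG.d₀ EG.d₁ wE) with hτ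
  have hτ0 : τ ≫ d₀ = a := by rw [hτ, Category.assoc, hinv1, pullback.lift_fst]
  have hτ1 : τ ≫ d₁ = b := by rw [hτ, Category.assoc, hinv2, pullback.lift_snd]
  -- final splitting
  obtain ⟨T', p, hp, I, P, s, N, w, hend, hjepi, hdesc⟩ := split τ
  have hpepi : Epi p := epi_of_effEpi hp
  refine ⟨I, P, fun i => s i ≫ p, N, w, ?_, ?_⟩
  · intro W φ ψ hφψ
    rw [← cancel_epi p]
    refine hjepi _ _ fun i => ?_
    simpa only [Category.assoc] using hφψ i
  · intro i
    constructor
    · rw [(hend i).1, hτ0, ← Category.assoc]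
    · rw [(hend i).2, hτ1, ← Category.assoc]

end KernelZigzag

section Main

variable [∀ J : Type v, HasColimitsOfShape (Discrete J) C]

theorem universalOfColimit
    (huniv : ∀ {J : Type v} (F : Discrete J ⥤ C) (c : Cocone F),
      IsColimit c → IsUniversalColimit c)
    (heff : ∀ A : EqGpd C, ∃ (Q : C) (q : A.X₀ ⟶ Q) (w : A.d₀ ≫ q = A.d₁ ≫ q),
      Nonempty (IsColimit (Cofork.ofπ q w)) ∧ IsIso (pullback.lift A.d₀ A.d₁ w))
    (hstab : ∀ {X Y Z : C} (f : X ⟶ Y) (g : Z ⟶ Y),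
      IsEffectiveEpi C f → IsEffectiveEpi C (pullback.snd f g))
    (J : Type v) [SmallCategory J] (F : J ⥤ C) (c : Cocone F) (hc : IsColimit c) :
    IsUniversalColimit c := by
  intro F' c' α f hcomp hα hsq
  classical
  have hcomp' : ∀ j, α.app j ≫ c.ι.app j = c'.ι.app j ≫ f := by
    intro j
    have := congrArg (fun t => t.app j) hcomp
    simpa using this
  -- the coproduct presentation of the colimit
  set FA : J → C := fun j => F.obj j with hFA
  set q : (∐ FA) ⟶ c.pt := Sigma.desc fun j => c.ι.app j with hq_def
  have hιq : ∀ j, Sigma.ι FA j ≫ q = c.ι.app j := fun j => by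
    rw [hq_def]; exact Sigma.ι_desc _ _
  -- the (symmetrized) generators
  set Gen : Type v := (Σ i : J, Σ j : J, (i ⟶ j)) ⊕ (Σ i : J, Σ j : J, (i ⟶ j))
    with hGen
  set Gobj : Gen → C := fun g => F.obj (Sum.elim (fun a => a.1) (fun a => a.1) g)
    with hGobj
  set gl : (∐ Gobj) ⟶ ∐ FA := Sigma.desc fun g =>
    Sum.rec (motive := fun g => Gobj g ⟶ ∐ FA)
      (fun a => Sigma.ι FA a.1)
      (fun a => F.map a.2.2 ≫ Sigma.ι FA a.2.1) g with hgl
  set gr : (∐ Gobj) ⟶ ∐ FA := Sigma.desc fun g =>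
    Sum.rec (motive := fun g => Gobj g ⟶ ∐ FA)
      (fun a => F.map a.2.2 ≫ Sigma.ι FA a.2.1)
      (fun a => Sigma.ι FA a.1) g with hgr
  set σ : (∐ Gobj) ⟶ ∐ Gobj := Sigma.desc fun g =>
    Sum.rec (motive := fun g => Gobj g ⟶ ∐ Gobj)
      (fun a => Sigma.ι Gobj (Sum.inr a))
      (fun a => Sigma.ι Gobj (Sum.inl a)) g with hσ_def
  have hσl : σ ≫ gl = gr := by
    apply Sigma.hom_ext
    rintro (a | a) <;> simp [hσ_def, hgl, hgr] <;> exact Sigma.ι_desc _ _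
  have hσr : σ ≫ gr = gl := by
    apply Sigma.hom_ext
    rintro (a | a) <;> simp [hσ_def, hgl, hgr] <;> exact Sigma.ι_desc _ _
  have wq : gl ≫ q = gr ≫ q := by
    apply Sigma.hom_ext
    rintro (⟨i, j, φ⟩ | ⟨i, j, φ⟩) <;>
      simp [hgl, hgr, hιq, Cocone.w c φ] <;> erw [Category.assoc, hιq, hιq, Cocone.w c φ]
  -- `q` is the coequalizer of the generators
  have Hq : ∀ {W : C} (m : (∐ FA) ⟶ W), gl ≫ m = gr ≫ m →
      ∃! t : c.pt ⟶ W, q ≫ t = m := by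
    intro W m hm
    have hnat : ∀ {i j : J} (φ : i ⟶ j),
        F.map φ ≫ Sigma.ι FA j ≫ m = Sigma.ι FA i ≫ m := by
      intro i j φ
      have := congrArg (fun t => Sigma.ι Gobj (Sum.inl ⟨i, j, φ⟩) ≫ t) hm
      simp only [hgl, hgr] at this
      rw [← Category.assoc, ← Category.assoc, Sigma.ι_desc, Sigma.ι_desc] at this
      exact (Category.assoc _ _ _).symm.trans this.symm
    set sc : Cocone F :=
      { pt := W
        ι := { app := fun j => Sigma.ι FA j ≫ m
               naturality := fun i j φ => by simpa using hnat φ } } with hsc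
    refine ⟨hc.desc sc, ?_, ?_⟩
    · apply Sigma.hom_ext
      intro j
      rw [← Category.assoc, hιq, hc.fac sc j]
    · intro t' ht'
      refine hc.uniq sc t' fun j => ?_
      rw [← hιq j, Category.assoc, ht']
  have hq : IsColimit (Cofork.ofπ q wq) := coforkIsColimitMk q wq Hq
  have hqepi : Epi q := epi_of_cofork hq
  -- `q` is an effective epi
  have hqeff : IsEffectiveEpi C q := by
    refine ⟨pullback.condition, ⟨coforkIsColimitMk _ _ ?_⟩⟩
    intro W m hm
    refine Hq m ?_
    have h1 : pullback.lift gl gr wq ≫ pullback.fst q q = gl := by simp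
    have h2 : pullback.lift gl gr wq ≫ pullback.snd q q = gr := by simp
    have hk := congrArg (fun t => pullback.lift gl gr wq ≫ t) hm
    simp only [← Category.assoc] at hk
    rw [h1, h2] at hk
    exact hk
  -- the pulled-back coproduct presentation
  set FA' : J → C := fun j => F'.obj j with hFA'
  set q' : (∐ FA') ⟶ c'.pt := Sigma.desc fun j => c'.ι.app j with hq'_def
  have hιq' : ∀ j, Sigma.ι FA' j ≫ q' = c'.ι.app j := fun j => by
    rw [hq'_def]; exact Sigma.ι_desc _ _
  set ρ : (∐ FA') ⟶ ∐ FA := Sigma.desc fun j => α.app j ≫ Sigma.ι FA j with hρ_def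
  have hιρ : ∀ j, Sigma.ι FA' j ≫ ρ = α.app j ≫ Sigma.ι FA j := fun j => by
    rw [hρ_def]; exact Sigma.ι_desc _ _
  have hw : ρ ≫ q = q' ≫ f := by
    apply Sigma.hom_ext
    intro j
    rw [← Category.assoc, ← Category.assoc, hιρ, hιq', Category.assoc, hιq,
      hcomp' j]
  -- the coproduct presentation square is a pullback (by universality of coproducts)
  have hPB : IsPullback ρ q' q f := by
    have hliftw : ∀ j : J, (α.app j ≫ Sigma.ι FA j) ≫ q = c'.ι.app j ≫ f := by
      intro j
      rw [Category.assoc, hιq, hcomp' j]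
    set cP : Cocone (Discrete.functor FA') :=
      { pt := pullback q f
        ι := Discrete.natTrans fun j =>
          pullback.lift (α.app j.as ≫ Sigma.ι FA j.as) (c'.ι.app j.as)
            (hliftw j.as) } with hcP_def
    obtain ⟨hcP⟩ := huniv (Discrete.functor FA) (colimit.cocone _)
      (colimit.isColimit _) cP (Discrete.natTrans fun j => α.app j.as)
      (pullback.fst q f)
      (by
        ext ⟨j⟩
        exact (pullback.lift_fst _ _ (hliftw j)).symm)
      (NatTrans.equifibered_of_discrete _)
      (by
        rintro ⟨j⟩
        have t := (IsPullback.of_hasPullback q f).flip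
        have s : IsPullback
            (pullback.lift (α.app j ≫ Sigma.ι FA j) (c'.ι.app j) (hliftw j) ≫
              pullback.snd q f)
            (α.app j) f (Sigma.ι FA j ≫ q) := by
          rw [pullback.lift_snd, hιq]
          exact hsq j
        have p : pullback.lift (α.app j ≫ Sigma.ι FA j) (c'.ι.app j) (hliftw j) ≫
            pullback.fst q f = α.app j ≫ Sigma.ι FA j := pullback.lift_fst _ _ _
        exact IsPullback.of_right s p t)
    set iso := (colimit.isColimit (Discrete.functor FA')).coconePointUniqueUpToIso hcP
      with hiso_def
    have hisoι : ∀ j : J, Sigma.ι FA' j ≫ iso.hom =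
        pullback.lift (α.app j ≫ Sigma.ι FA j) (c'.ι.app j) (hliftw j) := by
      intro j
      simp [hiso_def, hcP_def]
      rfl
    refine IsPullback.of_iso_pullback ⟨hw⟩ iso ?_ ?_
    · apply Sigma.hom_ext
      intro j
      rw [← Category.assoc, hisoι j, pullback.lift_fst, hιρ]
    · apply Sigma.hom_ext
      intro j
      rw [← Category.assoc, hisoι j, pullback.lift_snd, hιq']
  have pb_ext : ∀ {W : C} (u₁ u₂ : W ⟶ ∐ FA'), u₁ ≫ ρ = u₂ ≫ ρ →
      u₁ ≫ q' = u₂ ≫ q' → u₁ = u₂ := by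
    intro W u₁ u₂ h1 h2
    exact PullbackCone.IsLimit.hom_ext hPB.isLimit h1 h2
  -- `q'` coequalizes its kernel pair
  have Hq' : ∀ {W : C} (m : (∐ FA') ⟶ W),
      pullback.fst q' q' ≫ m = pullback.snd q' q' ≫ m →
      ∃! t : c'.pt ⟶ W, q' ≫ t = m := by
    intro W m hm
    -- transport along the iso `∐ FA' ≅ pullback q f`
    have hsndeff : IsEffectiveEpi C (pullback.snd q f) := hstab q f hqeff
    obtain ⟨wsnd, ⟨hcsnd⟩⟩ := hsndeff
    have hsnd_epi : Epi (pullback.snd q f) := epi_of_cofork hcsnd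
    set ψ : (∐ FA') ⟶ pullback q f := hPB.isoPullback.hom with hψ_def
    have hψ1 : ψ ≫ pullback.fst q f = ρ := hPB.isoPullback_hom_fst
    have hψ2 : ψ ≫ pullback.snd q f = q' := hPB.isoPullback_hom_snd
    have hinvψ : hPB.isoPullback.inv ≫ q' = pullback.snd q f :=
      (Iso.inv_comp_eq _).mpr hψ2.symm
    have hq'epi : Epi q' := by
      constructor
      intro Z u v huv
      have h2 := congrArg (fun t => hPB.isoPullback.inv ≫ t) huv
      simp only [← Category.assoc] at h2
      rw [hinvψ] at h2
      rwa [cancel_epi (pullback.snd q f)] at h2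
    have hkp : pullback.fst (pullback.snd q f) (pullback.snd q f) ≫
        hPB.isoPullback.inv ≫ m =
        pullback.snd (pullback.snd q f) (pullback.snd q f) ≫
        hPB.isoPullback.inv ≫ m := by
      have hcond : (pullback.fst (pullback.snd q f) (pullback.snd q f) ≫
          hPB.isoPullback.inv) ≫ q' =
          (pullback.snd (pullback.snd q f) (pullback.snd q f) ≫
          hPB.isoPullback.inv) ≫ q' := by
        rw [Category.assoc, Category.assoc, hinvψ, pullback.condition]
      have hj1 : pullback.lift _ _ hcond ≫ pullback.fst q' q' =
          pullback.fst (pullback.snd q f) (pullback.snd q f) ≫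
            hPB.isoPullback.inv := pullback.lift_fst _ _ _
      have hj2 : pullback.lift _ _ hcond ≫ pullback.snd q' q' =
          pullback.snd (pullback.snd q f) (pullback.snd q f) ≫
            hPB.isoPullback.inv := pullback.lift_snd _ _ _
      have hk := congrArg (fun t => pullback.lift _ _ hcond ≫ t) hm
      simp only [← Category.assoc] at hk
      rw [hj1, hj2] at hk
      simpa [Category.assoc] using hk
    have hfact : pullback.snd q f ≫
        hcsnd.desc (Cofork.ofπ (hPB.isoPullback.inv ≫ m) hkp) =
        hPB.isoPullback.inv ≫ m := by
      simpa using Cofork.IsColimit.π_desc hcsnd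
        (t := Cofork.ofπ (hPB.isoPullback.inv ≫ m) hkp)
    have hqt : q' ≫ hcsnd.desc (Cofork.ofπ (hPB.isoPullback.inv ≫ m) hkp) = m := by
      have := congrArg (fun t => hPB.isoPullback.hom ≫ t) hfact
      simp only [← Category.assoc] at this
      rw [hψ2] at this
      simpa [Category.assoc] using this
    refine ⟨hcsnd.desc (Cofork.ofπ (hPB.isoPullback.inv ≫ m) hkp), hqt, ?_⟩
    · intro t' ht'
      rw [← cancel_epi q', ht', hqt]
  -- now prove the colimit property of the pulled-back cocone
  have key : ∀ (s : Cocone F'),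
      pullback.fst q' q' ≫ (Sigma.desc fun j => s.ι.app j) =
      pullback.snd q' q' ≫ (Sigma.desc fun j => s.ι.app j) := by
    intro s
    set k : (∐ FA') ⟶ s.pt := Sigma.desc fun j => s.ι.app j with hk_def
    have hιk : ∀ j, Sigma.ι FA' j ≫ k = s.ι.app j := fun j => by
      rw [hk_def]; exact Sigma.ι_desc _ _
    -- the core computation for a single generator
    have core : ∀ {T₁ : C} (i j : J) (φ : i ⟶ j) (u : T₁ ⟶ F.obj i)
        (y₁ y₂ : T₁ ⟶ ∐ FA'), y₁ ≫ q' = y₂ ≫ q' →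
        y₁ ≫ ρ = u ≫ Sigma.ι FA i → y₂ ≫ ρ = u ≫ F.map φ ≫ Sigma.ι FA j →
        y₁ ≫ k = y₂ ≫ k := by
      intro T₁ i j φ u y₁ y₂ hy hy1 hy2
      have hξw : (y₁ ≫ q') ≫ f = u ≫ c.ι.app i := by
        rw [Category.assoc, ← hw, ← Category.assoc, hy1, Category.assoc, hιq]
      set ξ := (hsq i).lift (y₁ ≫ q') u hξw with hξ_def
      have hξ1 : ξ ≫ c'.ι.app i = y₁ ≫ q' := (hsq i).lift_fst _ _ _
      have hξ2 : ξ ≫ α.app i = u := (hsq i).lift_snd _ _ _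
      have e₁ : y₁ = ξ ≫ Sigma.ι FA' i := by
        refine pb_ext _ _ ?_ ?_
        · rw [Category.assoc, hιρ, hy1, ← Category.assoc, hξ2]
        · rw [Category.assoc, hιq', hξ1]
      have e₂ : y₂ = ξ ≫ F'.map φ ≫ Sigma.ι FA' j := by
        refine pb_ext _ _ ?_ ?_
        · rw [hy2]
          have hr : (ξ ≫ F'.map φ ≫ Sigma.ι FA' j) ≫ ρ =
              ξ ≫ F'.map φ ≫ α.app j ≫ Sigma.ι FA j := by
            simp only [Category.assoc]
            rw [hιρ]
          rw [hr, ← Category.assoc (F'.map φ), α.naturality φ, ← hξ2]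
          simp only [Category.assoc]
        · rw [← hy, ← hξ1]
          simp only [Category.assoc]
          rw [hιq', Cocone.w c' φ]
      rw [e₁, e₂, Category.assoc, hιk, Category.assoc, Category.assoc, hιk,
        Cocone.w s φ]
    -- generators relate equal `k`-values
    have gen : ∀ {T₀ : C} (g : T₀ ⟶ ∐ Gobj) (x₁ x₂ : T₀ ⟶ ∐ FA'),
        x₁ ≫ q' = x₂ ≫ q' → x₁ ≫ ρ = g ≫ gl → x₂ ≫ ρ = g ≫ gr →
        x₁ ≫ k = x₂ ≫ k := by
      intro T₀ g x₁ x₂ hy h1 h2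
      obtain ⟨hdec⟩ := decompose huniv Gobj g
      refine hdec.hom_ext ?_
      rintro ⟨gi⟩
      have hcondp : pullback.fst (Sigma.ι Gobj gi) g ≫ Sigma.ι Gobj gi =
          pullback.snd (Sigma.ι Gobj gi) g ≫ g := pullback.condition
      set u := pullback.fst (Sigma.ι Gobj gi) g with hu_def
      set v := pullback.snd (Sigma.ι Gobj gi) g with hv_def
      have goal' : (v ≫ x₁) ≫ k = (v ≫ x₂) ≫ k → v ≫ x₁ ≫ k = v ≫ x₂ ≫ k := by
        intro h
        simpa [Category.assoc] using h
      have hvq : (v ≫ x₁) ≫ q' = (v ≫ x₂) ≫ q' := by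
        rw [Category.assoc, Category.assoc, hy]
      obtain (⟨i, j, φ⟩ | ⟨i, j, φ⟩) := gi
      · have hgl1 : Sigma.ι Gobj (Sum.inl ⟨i, j, φ⟩) ≫ gl = Sigma.ι FA i := by
          rw [hgl]; exact Sigma.ι_desc _ _
        have hgr1 : Sigma.ι Gobj (Sum.inl ⟨i, j, φ⟩) ≫ gr =
            F.map φ ≫ Sigma.ι FA j := by
          rw [hgr]; exact Sigma.ι_desc _ _
        have hρ1 : (v ≫ x₁) ≫ ρ = u ≫ Sigma.ι FA i := by
          rw [Category.assoc, h1, ← Category.assoc, ← hcondp, Category.assoc, hgl1]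
        have hρ2 : (v ≫ x₂) ≫ ρ = u ≫ F.map φ ≫ Sigma.ι FA j := by
          rw [Category.assoc, h2, ← Category.assoc, ← hcondp, Category.assoc, hgr1]
          rfl
        have := core i j φ u (v ≫ x₁) (v ≫ x₂) hvq hρ1 hρ2
        exact goal' this
      · have hgl1 : Sigma.ι Gobj (Sum.inr ⟨i, j, φ⟩) ≫ gl =
            F.map φ ≫ Sigma.ι FA j := by
          rw [hgl]; exact Sigma.ι_desc _ _
        have hgr1 : Sigma.ι Gobj (Sum.inr ⟨i, j, φ⟩) ≫ gr = Sigma.ι FA i := by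
          rw [hgr]; exact Sigma.ι_desc _ _
        have hρ1 : (v ≫ x₂) ≫ ρ = u ≫ Sigma.ι FA i := by
          rw [Category.assoc, h2, ← Category.assoc, ← hcondp, Category.assoc, hgr1]
        have hρ2 : (v ≫ x₁) ≫ ρ = u ≫ F.map φ ≫ Sigma.ι FA j := by
          rw [Category.assoc, h1, ← Category.assoc, ← hcondp, Category.assoc, hgl1]
          rfl
        have := core i j φ u (v ≫ x₂) (v ≫ x₁) hvq.symm hρ1 hρ2
        exact goal' this.symm
    -- chains relate equal `k`-values
    have dagger : ∀ (n : ℕ) {T₀ : C} (wn : T₀ ⟶ (chain gl gr n).X)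
        (x₁ x₂ : T₀ ⟶ ∐ FA'), x₁ ≫ q' = x₂ ≫ q' →
        x₁ ≫ ρ = wn ≫ (chain gl gr n).l → x₂ ≫ ρ = wn ≫ (chain gl gr n).r →
        x₁ ≫ k = x₂ ≫ k := by
      intro n
      induction n with
      | zero =>
        intro T₀ wn x₁ x₂ hy h1 h2
        have : x₁ = x₂ := by
          refine pb_ext _ _ ?_ hy
          rw [h1, h2]
        rw [this]
      | succ n ih =>
        intro T₀ wn x₁ x₂ hy h1 h2
        have hl : (chain gl gr (n+1)).l =
          pullback.fst (chain gl gr n).r gl ≫ (chain gl gr n).l := rfl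
        have hr : (chain gl gr (n+1)).r =
          pullback.snd (chain gl gr n).r gl ≫ gr := rfl
        rw [hl] at h1
        rw [hr] at h2
        set w1 := wn ≫ pullback.fst (chain gl gr n).r gl with hw1_def
        set gw := wn ≫ pullback.snd (chain gl gr n).r gl with hgw_def
        have hmid : w1 ≫ (chain gl gr n).r = gw ≫ gl := by
          rw [hw1_def, hgw_def, Category.assoc, Category.assoc,
            pullback.condition]
        have h1' : x₁ ≫ ρ = w1 ≫ (chain gl gr n).l := by
          rw [h1, hw1_def, Category.assoc]
        have hmidq : (w1 ≫ (chain gl gr n).r) ≫ q = (x₁ ≫ q') ≫ f := by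
          rw [Category.assoc, ← chain_comp gl gr q wq n, ← Category.assoc,
            ← h1', Category.assoc, hw, ← Category.assoc]
        set xm := hPB.lift (w1 ≫ (chain gl gr n).r) (x₁ ≫ q') hmidq with hxm_def
        have hxm1 : xm ≫ ρ = w1 ≫ (chain gl gr n).r := hPB.lift_fst _ _ _
        have hxm2 : xm ≫ q' = x₁ ≫ q' := hPB.lift_snd _ _ _
        have step1 : x₁ ≫ k = xm ≫ k := ih w1 x₁ xm hxm2.symm h1' hxm1
        have step2 : xm ≫ k = x₂ ≫ k := by
          refine gen gw xm x₂ ?_ ?_ ?_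
          · rw [hxm2, hy]
          · rw [hxm1, hmid]
          · rw [h2, hgw_def, Category.assoc]
        rw [step1, step2]
    -- conclude by the kernel zigzag lemma
    have habk : (pullback.fst q' q' ≫ ρ) ≫ q = (pullback.snd q' q' ≫ ρ) ≫ q := by
      rw [Category.assoc, Category.assoc, hw, ← Category.assoc, ← Category.assoc,
        pullback.condition]
    obtain ⟨I, P, e, N, wts, hjepi, hend⟩ := kernelZigzag huniv heff hstab
      gl gr σ hσl hσr q wq hq (pullback.fst q' q' ≫ ρ) (pullback.snd q' q' ≫ ρ) habk
    refine hjepi _ _ fun i => ?_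
    have hd := dagger (N i) (wts i) (e i ≫ pullback.fst q' q')
      (e i ≫ pullback.snd q' q')
      (by rw [Category.assoc, Category.assoc, pullback.condition])
      (by rw [Category.assoc, (hend i).1])
      (by rw [Category.assoc, (hend i).2])
    simpa [Category.assoc] using hd
  -- assemble the colimit structure
  have H : ∀ s : Cocone F', ∃! t : c'.pt ⟶ s.pt,
      q' ≫ t = Sigma.desc fun j => s.ι.app j :=
    fun s => Hq' _ (key s)
  refine ⟨{ desc := fun s => (H s).exists.choose
            fac := fun s j => ?_
            uniq := fun s t' ht' => (H s).unique ?_ (H s).exists.choose_spec }⟩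
  · rw [← hιq' j, Category.assoc, (H s).exists.choose_spec, Sigma.ι_desc]
  · apply Sigma.hom_ext
    intro j
    rw [← Category.assoc, hιq', ht' j, Sigma.ι_desc]

end Main

end ColimUniv

/-- in an infinitary pretopos, all small colimits are universal: any
colimit cocone of a small diagram is stable under pullback.  In particular,
coequalizers of arbitrary parallel pairs are stable under pullback. -/
theorem colimits_universal_of_infinitary_pretopos
    [∀ J : Type v, HasColimitsOfShape (Discrete J) C]
    (hdisj : Nonempty (CoproductsDisjoint C))
    (huniv : ∀ {J : Type v} (F : Discrete J ⥤ C) (c : Cocone F),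
      IsColimit c → IsUniversalColimit c)
    (heff : ∀ A : EqGpd C, ∃ (Q : C) (q : A.X₀ ⟶ Q) (w : A.d₀ ≫ q = A.d₁ ≫ q),
      Nonempty (IsColimit (Cofork.ofπ q w)) ∧ IsIso (pullback.lift A.d₀ A.d₁ w))
    (hstab : ∀ {X Y Z : C} (f : X ⟶ Y) (g : Z ⟶ Y),
      IsEffectiveEpi C f → IsEffectiveEpi C (pullback.snd f g)) :
    (∀ (J : Type v) [SmallCategory J] (F : J ⥤ C) (c : Cocone F),
      IsColimit c → IsUniversalColimit c) ∧
    (∀ {X Y : C} (f g : X ⟶ Y) (c : Cofork f g),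
      IsColimit c → IsUniversalColimit c) := by
  constructor
  · intro J _ F c hc
    exact ColimUniv.universalOfColimit huniv heff (fun f g h => hstab f g h) J F c hc
  · intro X Y f g c hc
    refine (IsUniversalColimit.whiskerEquivalence_iff
      (AsSmall.equiv (C := WalkingParallelPair)).symm).mp ?_
    exact ColimUniv.universalOfColimit huniv heff (fun f g h => hstab f g h) _ _
      (c.whisker (AsSmall.equiv (C := WalkingParallelPair)).symm.functor)
      (hc.whiskerEquivalence _)
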